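/- For every positive integer n, the number of divisors satisfies τ(n) ≪ ∑_{d | n, d ≤ n^{1/3}} τ(d)^3, with an absolute implied constant. -/

import Mathlib

open Finset

section aux

lemma greedy0 {ι : Type*} [DecidableEq ι] (v w : ι → ℝ) :
    ∀ (I : Finset ι), (∀ i ∈ I, 0 < w i) → ∀ (W : ℝ), 0 ≤ W →
    ∃ S : Finset ι, S ⊆ I ∧ (∑ i ∈ S, w i ≤ W) ∧
      (∀ i ∈ S, ∀ j ∈ I, j ∉ S → v j * w i ≤ v i * w j) ∧
      (S = I ∨ ∃ x ∈ I, x ∉ S ∧ W < (∑ i ∈ S, w i) + w x ∧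
        ∀ j ∈ I, j ∉ S → v j * w x ≤ v x * w j) := by
  intro I
  induction I using Finset.strongInduction with
  | _ I ih =>
    intro hw W hW
    rcases I.eq_empty_or_nonempty with rfl | hne
    · exact ⟨∅, by simp, by simpa using hW, by simp, Or.inl rfl⟩
    obtain ⟨x, hxI, hmax⟩ := I.exists_max_image (fun i => v i / w i) hne
    have hwx : 0 < w x := hw x hxI
    have hdensx : ∀ j ∈ I, v j * w x ≤ v x * w j := by
      intro j hj
      have := hmax j hj
      have hwj := hw j hj
      rw [div_le_div_iff₀ hwj hwx] at this
      linarith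
    by_cases hcase : w x ≤ W
    · obtain ⟨S, hSsub, hSw, hSdens, hSlast⟩ :=
        ih (I.erase x) (Finset.erase_ssubset hxI)
          (fun i hi => hw i (Finset.mem_of_mem_erase hi)) (W - w x) (by linarith)
      have hxS : x ∉ S := fun h => Finset.notMem_erase x I (hSsub h)
      refine ⟨insert x S, ?_, ?_, ?_, ?_⟩
      · intro i hi
        rcases Finset.mem_insert.mp hi with rfl | hi
        · exact hxI
        · exact Finset.mem_of_mem_erase (hSsub hi)
      · rw [Finset.sum_insert hxS]; linarith
      · intro i hi j hj hjS
        have hjx : j ≠ x := fun h => hjS (h ▸ Finset.mem_insert_self x S)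
        have hjS' : j ∉ S := fun h => hjS (Finset.mem_insert_of_mem h)
        rcases Finset.mem_insert.mp hi with rfl | hi
        · exact hdensx j hj
        · exact hSdens i hi j (Finset.mem_erase.mpr ⟨hjx, hj⟩) hjS'
      · rcases hSlast with rfl | ⟨y, hyI, hyS, hyW, hydens⟩
        · left; rw [Finset.insert_erase hxI]
        · right
          refine ⟨y, Finset.mem_of_mem_erase hyI, ?_, ?_, ?_⟩
          · intro h
            rcases Finset.mem_insert.mp h with rfl | h
            · exact Finset.notMem_erase y I hyI
            · exact hyS h
          · rw [Finset.sum_insert hxS]; linarith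
          · intro j hj hjS
            have hjx : j ≠ x := fun h => hjS (h ▸ Finset.mem_insert_self x S)
            exact hydens j (Finset.mem_erase.mpr ⟨hjx, hj⟩)
              (fun h => hjS (Finset.mem_insert_of_mem h))
    · refine ⟨∅, by simp, by simpa using hW, by simp, Or.inr ⟨x, hxI, by simp, ?_, ?_⟩⟩
      · simpa using lt_of_not_ge hcase
      · intro j hj _; exact hdensx j hj

lemma telescope_log (m : ℕ) :
    ∑ b ∈ Finset.Icc 1 m, (Real.log (b + 1) - Real.log b) = Real.log (m + 1) := by
  induction m with
  | zero => simp
  | succ m ihm =>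
    rw [← Finset.Ico_add_one_right_eq_Icc, Finset.sum_Ico_succ_top (by omega), Finset.Ico_add_one_right_eq_Icc, ihm]
    push_cast
    ring

lemma icc_of_downward (S : Finset ℕ) (h1 : ∀ b ∈ S, 1 ≤ b)
    (hdc : ∀ b ∈ S, ∀ c, 1 ≤ c → c ≤ b → c ∈ S) : S = Finset.Icc 1 S.card := by
  have hsub : S ⊆ Finset.Icc 1 S.card := by
    intro b hb
    have : Finset.Icc 1 b ⊆ S := fun c hc => by
      rw [Finset.mem_Icc] at hc; exact hdc b hb c hc.1 hc.2
    have hcard := Finset.card_le_card this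
    rw [Nat.card_Icc] at hcard
    exact Finset.mem_Icc.mpr ⟨h1 b hb, by omega⟩
  exact Finset.eq_of_subset_of_card_le hsub (by rw [Nat.card_Icc]; omega)

lemma tau_prod_pow (P : Finset ℕ) (hP : ∀ p ∈ P, p.Prime) (m : ℕ → ℕ) :
    (∏ p ∈ P, p ^ m p).divisors.card = ∏ p ∈ P, (m p + 1) := by
  induction P using Finset.induction with
  | empty => simp
  | @insert q P' hq ih =>
    have hqp : q.Prime := hP q (Finset.mem_insert_self q P')
    have hP' : ∀ p ∈ P', p.Prime := fun p hp => hP p (Finset.mem_insert_of_mem hp)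
    have hcop : (q ^ m q).Coprime (∏ p ∈ P', p ^ m p) := by
      apply Nat.Coprime.pow_left
      apply Nat.Coprime.prod_right
      intro p hp
      exact Nat.Coprime.pow_right _
        ((Nat.coprime_primes hqp (hP' p hp)).mpr (fun h => hq (h ▸ hp)))
    rw [Finset.prod_insert hq, hcop.card_divisors_mul, ih hP', Finset.prod_insert hq]
    congr 1
    rw [Nat.divisors_prime_pow hqp]
    simp

lemma vlt {c b : ℕ} (h1 : 1 ≤ c) (h2 : c < b) :
    Real.log (b + 1) - Real.log b < Real.log (c + 1) - Real.log c := by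
  have hc : (0:ℝ) < c := by exact_mod_cast h1
  have hb : (0:ℝ) < b := by exact_mod_cast Nat.lt_of_lt_of_le Nat.zero_lt_one (le_trans h1 h2.le)
  have hcb : (c:ℝ) < b := by exact_mod_cast h2
  have key : ((b:ℝ) + 1) * c < ((c:ℝ) + 1) * b := by nlinarith
  have hlt := Real.log_lt_log (by positivity) key
  rw [Real.log_mul (by positivity) hc.ne', Real.log_mul (by positivity) hb.ne'] at hlt
  linarith

end aux

theorem tau_le_sum_tau_cube_small_divisors :
    ∃ C : ℝ, 0 < C ∧ ∀ n : ℕ, 0 < n →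
      (n.divisors.card : ℝ) ≤
        C * ∑ d ∈ n.divisors.filter (fun d : ℕ => (d : ℝ) ≤ (n : ℝ) ^ ((1 : ℝ) / 3)),
          (d.divisors.card : ℝ) ^ 3 := by
  classical
  refine ⟨8, by norm_num, ?_⟩
  intro n hn
  have hn' : n ≠ 0 := hn.ne'
  set P : Finset ℕ := n.primeFactors with hPdef
  have hPprime : ∀ p ∈ P, p.Prime := fun p hp => Nat.prime_of_mem_primeFactors hp
  set a : ℕ → ℕ := fun p => n.factorization p with hadef
  -- the increment set
  set I : Finset ((_ : ℕ) × ℕ) := P.sigma (fun p => Finset.Icc 1 (a p)) with hIdef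
  set v : ((_ : ℕ) × ℕ) → ℝ := fun i => Real.log (i.2 + 1) - Real.log i.2 with hvdef
  set w : ((_ : ℕ) × ℕ) → ℝ := fun i => Real.log i.1 with hwdef
  have hmemI : ∀ i : (_ : ℕ) × ℕ, i ∈ I ↔ i.1 ∈ P ∧ 1 ≤ i.2 ∧ i.2 ≤ a i.1 := by
    intro i; rw [hIdef, Finset.mem_sigma, Finset.mem_Icc]
  have hppos : ∀ p ∈ P, (1:ℝ) < p := by
    intro p hp; exact_mod_cast (hPprime p hp).one_lt
  have hwpos : ∀ i ∈ I, 0 < w i := by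
    intro i hi
    exact Real.log_pos (hppos i.1 ((hmemI i).mp hi).1)
  have hvnonneg : ∀ i : (_ : ℕ) × ℕ, 1 ≤ i.2 → 0 ≤ v i := by
    intro i hi2
    have : (0:ℝ) < i.2 := by exact_mod_cast hi2
    have := Real.log_le_log this (by linarith : (i.2:ℝ) ≤ i.2 + 1)
    simp only [hvdef]; linarith
  have hvle : ∀ i : (_ : ℕ) × ℕ, 1 ≤ i.2 → v i ≤ Real.log 2 := by
    intro i hi2
    have h1 : (1:ℝ) ≤ i.2 := by exact_mod_cast hi2
    have h2 : ((i.2:ℝ) + 1) ≤ 2 * i.2 := by linarith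
    have h3 := Real.log_le_log (by linarith) h2
    rw [Real.log_mul (by norm_num) (by linarith)] at h3
    simp only [hvdef]; linarith
  -- total weight and value
  have hfact : ∏ p ∈ P, p ^ a p = n := by
    have := Nat.factorization_prod_pow_eq_self hn'
    rwa [Finsupp.prod, Nat.support_factorization] at this
  have hpow_ne : ∀ p ∈ P, ((p : ℝ) ^ a p) ≠ 0 := by
    intro p hp; have := hppos p hp; positivity
  have hlogn : Real.log n = ∑ p ∈ P, (a p : ℝ) * Real.log p := by
    conv_lhs => rw [← hfact]
    rw [Nat.cast_prod]
    rw [Real.log_prod (by intro p hp; push_cast; exact hpow_ne p hp)]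
    refine Finset.sum_congr rfl fun p hp => ?_
    push_cast
    rw [Real.log_pow]
  have hwI : ∑ i ∈ I, w i = Real.log n := by
    rw [hIdef, Finset.sum_sigma, hlogn]
    refine Finset.sum_congr rfl fun p hp => ?_
    simp only [hwdef]
    rw [Finset.sum_const, Nat.card_Icc, Nat.add_sub_cancel, nsmul_eq_mul]
  have htaun : (n.divisors.card : ℝ) = ∏ p ∈ P, ((a p : ℝ) + 1) := by
    rw [Nat.card_divisors hn']
    push_cast
    rfl
  have hvI : ∑ i ∈ I, v i = Real.log (n.divisors.card) := by
    rw [hIdef, Finset.sum_sigma, htaun,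
      Real.log_prod (fun p hp => by positivity)]
    refine Finset.sum_congr rfl fun p hp => ?_
    exact telescope_log (a p) |>.trans (by push_cast; ring_nf)
  -- apply greedy
  have hWpos : (0:ℝ) ≤ Real.log n / 3 := by
    have := Real.log_natCast_nonneg n; linarith
  obtain ⟨S, hSI, hSw, hSdens, hSlast⟩ := greedy0 v w I hwpos (Real.log n / 3) hWpos
  -- fibers of S
  set m : ℕ → ℕ := fun p =>
    ((Finset.Icc 1 (a p)).filter (fun b => (⟨p, b⟩ : (_ : ℕ) × ℕ) ∈ S)).card with hmdef
  have hfib : ∀ p ∈ P,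
      (Finset.Icc 1 (a p)).filter (fun b => (⟨p, b⟩ : (_ : ℕ) × ℕ) ∈ S) =
        Finset.Icc 1 (m p) := by
    intro p hp
    refine icc_of_downward _ (fun b hb => (Finset.mem_Icc.mp (Finset.mem_filter.mp hb).1).1) ?_
    intro b hb c hc1 hcb
    rw [Finset.mem_filter] at hb ⊢
    obtain ⟨hbIcc, hbS⟩ := hb
    have hbb := Finset.mem_Icc.mp hbIcc
    have hcIcc : c ∈ Finset.Icc 1 (a p) := Finset.mem_Icc.mpr ⟨hc1, le_trans hcb hbb.2⟩
    refine ⟨hcIcc, ?_⟩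
    rcases eq_or_lt_of_le hcb with rfl | hlt
    · exact hbS
    by_contra hcS
    have hcI : (⟨p, c⟩ : (_ : ℕ) × ℕ) ∈ I := (hmemI _).mpr ⟨hp, hc1, le_trans hcb hbb.2⟩
    have := hSdens _ hbS _ hcI hcS
    have hwp : 0 < Real.log p := Real.log_pos (hppos p hp)
    have hvv := vlt hc1 hlt
    simp only [hvdef, hwdef] at this
    nlinarith
  have hm_le : ∀ p, m p ≤ a p := by
    intro p
    calc m p ≤ (Finset.Icc 1 (a p)).card := Finset.card_filter_le _ _
    _ = a p := by rw [Nat.card_Icc, Nat.add_sub_cancel]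
  have hSeq : S = P.sigma (fun p => Finset.Icc 1 (m p)) := by
    ext ⟨p, b⟩
    constructor
    · intro h
      have hI := hSI h
      obtain ⟨hp, hb1, hba⟩ := (hmemI _).mp hI
      rw [Finset.mem_sigma]
      refine ⟨hp, ?_⟩
      rw [← hfib p hp, Finset.mem_filter]
      exact ⟨Finset.mem_Icc.mpr ⟨hb1, hba⟩, h⟩
    · intro h
      rw [Finset.mem_sigma] at h
      obtain ⟨hp, hb⟩ := h
      rw [← hfib p hp, Finset.mem_filter] at hb
      exact hb.2
  -- the divisor d
  set d : ℕ := ∏ p ∈ P, p ^ m p with hddef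
  have hd_dvd : d ∣ n := by
    rw [← hfact]
    exact Finset.prod_dvd_prod_of_dvd _ _ fun p hp => pow_dvd_pow p (hm_le p)
  have hd_pos : 0 < d := by
    refine Finset.prod_pos fun p hp => pow_pos (hPprime p hp).pos _
  have htaud : (d.divisors.card : ℝ) = ∏ p ∈ P, ((m p : ℝ) + 1) := by
    rw [hddef, tau_prod_pow P hPprime m]
    push_cast
    rfl
  have hwS : ∑ i ∈ S, w i = ∑ p ∈ P, (m p : ℝ) * Real.log p := by
    rw [hSeq, Finset.sum_sigma]
    refine Finset.sum_congr rfl fun p hp => ?_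
    simp only [hwdef]
    rw [Finset.sum_const, Nat.card_Icc, Nat.add_sub_cancel, nsmul_eq_mul]
  have hlogd : Real.log d = ∑ i ∈ S, w i := by
    rw [hwS, hddef, Nat.cast_prod,
      Real.log_prod (by
        intro p hp
        have := (hPprime p hp).pos
        have : (0:ℝ) < p := by exact_mod_cast this
        push_cast
        positivity)]
    refine Finset.sum_congr rfl fun p hp => ?_
    push_cast
    rw [Real.log_pow]
  have htaud_pos : (0:ℝ) < d.divisors.card := by
    have : 0 < d.divisors.card := Finset.card_pos.mpr ⟨d, Nat.mem_divisors_self d hd_pos.ne'⟩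
    exact_mod_cast this
  have hvS : ∑ i ∈ S, v i = Real.log (d.divisors.card) := by
    rw [hSeq, Finset.sum_sigma, htaud,
      Real.log_prod (fun p hp => Nat.cast_add_one_ne_zero _)]
    refine Finset.sum_congr rfl fun p hp => ?_
    exact telescope_log (m p) |>.trans (by push_cast; ring_nf)
  -- key inequality
  have hvSnonneg : 0 ≤ ∑ i ∈ S, v i :=
    Finset.sum_nonneg fun i hi => hvnonneg i ((hmemI i).mp (hSI hi)).2.1
  have key : Real.log (n.divisors.card) ≤
      3 * Real.log (d.divisors.card) + 3 * Real.log 2 := by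
    rw [← hvI, ← hvS]
    have hlog2 : (0:ℝ) ≤ Real.log 2 := Real.log_nonneg (by norm_num)
    rcases hSlast with rfl | ⟨x, hxI, hxS, hxW, hxdens⟩
    · linarith
    have hwxpos : 0 < w x := hwpos x hxI
    set ρ : ℝ := v x / w x with hρdef
    have hvx_nonneg : 0 ≤ v x := hvnonneg x ((hmemI x).mp hxI).2.1
    have hρ0 : 0 ≤ ρ := div_nonneg hvx_nonneg hwxpos.le
    have h5 : ρ * w x = v x := div_mul_cancel₀ _ hwxpos.ne'
    have h6 : v x ≤ Real.log 2 := hvle x ((hmemI x).mp hxI).2.1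
    have h1 : ∑ j ∈ I \ S, v j ≤ ρ * ∑ j ∈ I \ S, w j := by
      rw [Finset.mul_sum]
      refine Finset.sum_le_sum fun j hj => ?_
      obtain ⟨hjI, hjS⟩ := Finset.mem_sdiff.mp hj
      have := hxdens j hjI hjS
      rw [hρdef, div_mul_eq_mul_div, le_div_iff₀ hwxpos]
      linarith
    have h2 : ρ * ∑ i ∈ S, w i ≤ ∑ i ∈ S, v i := by
      rw [Finset.mul_sum]
      refine Finset.sum_le_sum fun i hi => ?_
      have := hSdens i hi x hxI hxS
      rw [hρdef, div_mul_eq_mul_div, div_le_iff₀ hwxpos]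
      linarith
    have h3 : ∑ j ∈ I \ S, w j = Real.log n - ∑ i ∈ S, w i := by
      rw [← hwI, eq_sub_iff_add_eq, Finset.sum_sdiff hSI]
    have h4 : ∑ i ∈ I, v i = ∑ i ∈ S, v i + ∑ j ∈ I \ S, v j := by
      rw [add_comm, Finset.sum_sdiff hSI]
    have h7 : ρ * (Real.log n - ∑ i ∈ S, w i) ≤
        ρ * (2 * (∑ i ∈ S, w i) + 3 * w x) :=
      mul_le_mul_of_nonneg_left (by linarith) hρ0
    have h8 : ρ * (2 * (∑ i ∈ S, w i) + 3 * w x) =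
        2 * (ρ * ∑ i ∈ S, w i) + 3 * (ρ * w x) := by ring
    rw [h3] at h1
    linarith
  -- conclude: τ n ≤ 8 τ(d)^3
  have htaun_pos : (0:ℝ) < n.divisors.card := by
    have : 0 < n.divisors.card := Finset.card_pos.mpr ⟨n, Nat.mem_divisors_self n hn'⟩
    exact_mod_cast this
  have hmain : (n.divisors.card : ℝ) ≤ 8 * (d.divisors.card : ℝ) ^ 3 := by
    have h8pos : (0:ℝ) < 8 * (d.divisors.card : ℝ) ^ 3 := mul_pos (by norm_num) (pow_pos htaud_pos 3)
    rw [← Real.log_le_log_iff htaun_pos h8pos]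
    rw [Real.log_mul (by norm_num) (pow_pos htaud_pos 3).ne', Real.log_pow]
    have : Real.log 8 = 3 * Real.log 2 := by
      rw [show (8:ℝ) = 2 ^ 3 by norm_num, Real.log_pow]
      push_cast; ring
    rw [this]
    push_cast
    linarith
  -- d is in the filtered set
  have hd13 : (d : ℝ) ≤ (n : ℝ) ^ ((1:ℝ)/3) := by
    have hnpos : (0:ℝ) < n := by exact_mod_cast hn
    have hrp : (0:ℝ) < (n : ℝ) ^ ((1:ℝ)/3) := Real.rpow_pos_of_pos hnpos _
    have hdp : (0:ℝ) < d := by exact_mod_cast hd_pos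
    rw [← Real.log_le_log_iff hdp hrp, Real.log_rpow hnpos]
    rw [hlogd]
    linarith
  have hdmem : d ∈ n.divisors.filter (fun d : ℕ => (d : ℝ) ≤ (n : ℝ) ^ ((1 : ℝ) / 3)) := by
    rw [Finset.mem_filter, Nat.mem_divisors]
    exact ⟨⟨hd_dvd, hn'⟩, hd13⟩
  have hsum : (d.divisors.card : ℝ) ^ 3 ≤
      ∑ e ∈ n.divisors.filter (fun d : ℕ => (d : ℝ) ≤ (n : ℝ) ^ ((1 : ℝ) / 3)),
        (e.divisors.card : ℝ) ^ 3 :=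
    Finset.single_le_sum (f := fun e : ℕ => ((e.divisors.card : ℝ)) ^ 3) (fun e _ => pow_nonneg (Nat.cast_nonneg _) 3) hdmem
  linarith
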